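/- Gaussian case of the key block computation: if G_0,…,G_n are i.i.d. standard Gaussians and d_j(G) = (2n)^{-1/2}[√2 G_0 + (−1)^j √2 G_n + 2Σ_{k=1}^{n−1} G_k cos(2πjk/(2n))] for 0 ≤ j < 2n, then the random variables d_1(G), …, d_{n−1}(G) are i.i.d. standard Gaussians, and d_0(G), d_n(G) are independent Gaussians with variance 2, independent of the others. -/

import Mathlib

open MeasureTheory ProbabilityTheory Real Set

namespace GaussAux

theorem lintegral_pi_prod {m : ℕ} {E : Fin m → Type*} [∀ i, MeasurableSpace (E i)]
    (μ : ∀ i, Measure (E i)) [∀ i, SigmaFinite (μ i)]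
    (f : ∀ i, E i → ENNReal) (hf : ∀ i, Measurable (f i)) :
    ∫⁻ x, ∏ i, f i (x i) ∂Measure.pi μ = ∏ i, ∫⁻ x, f i x ∂μ i := by
  induction m with
  | zero => simp
  | succ N ih =>
    have hmp := (measurePreserving_piFinSuccAbove μ 0).symm
    have hmeas : Measurable fun x : ∀ i, E i => ∏ i, f i (x i) :=
      Finset.measurable_prod _ (fun i _ => (hf i).comp (measurable_pi_apply i))
    rw [← hmp.lintegral_comp hmeas]
    simp_rw [MeasurableEquiv.piFinSuccAbove_symm_apply, Fin.insertNthEquiv,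
      Fin.prod_univ_succ, Fin.insertNth_zero]
    simp only [Fin.zero_succAbove, Equiv.coe_fn_mk, Function.comp_def, Fin.cons_zero, Fin.cons_succ, cast_eq]
    show ∫⁻ z : E 0 × ((i : Fin N) → E i.succ), f 0 z.1 * ∏ i, f i.succ (z.2 i)
      ∂((μ 0).prod (Measure.pi fun i => μ i.succ)) = _
    have hmeas2 : Measurable fun x : ∀ i : Fin N, E i.succ => ∏ i, f i.succ (x i) :=
      Finset.measurable_prod _ (fun i _ => (hf i.succ).comp (measurable_pi_apply i))
    rw [lintegral_prod_mul (hf 0).aemeasurable hmeas2.aemeasurable]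
    rw [ih (fun i => μ i.succ) (fun i => f i.succ) (fun i => hf i.succ)]

theorem pi_withDensity {m : ℕ} {E : Fin m → Type*} [∀ i, MeasurableSpace (E i)]
    (μ : ∀ i, Measure (E i)) [∀ i, SigmaFinite (μ i)]
    (f : ∀ i, E i → ENNReal) (hf : ∀ i, Measurable (f i))
    [∀ i, SigmaFinite ((μ i).withDensity (f i))] :
    Measure.pi (fun i => (μ i).withDensity (f i)) =
      (Measure.pi μ).withDensity (fun x => ∏ i, f i (x i)) := by
  refine Measure.pi_eq (fun s hs => ?_)
  rw [withDensity_apply _ (MeasurableSet.univ_pi hs),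
    ← lintegral_indicator (MeasurableSet.univ_pi hs) _]
  have : ∀ x : ∀ i, E i, (univ.pi s).indicator (fun x => ∏ i, f i (x i)) x
      = ∏ i, (s i).indicator (f i) (x i) := by
    intro x
    by_cases hx : x ∈ univ.pi s
    · rw [indicator_of_mem hx]
      exact Finset.prod_congr rfl fun i _ => (indicator_of_mem (hx i (mem_univ i)) _).symm
    · rw [indicator_of_notMem hx]
      rw [mem_univ_pi] at hx
      push_neg at hx
      obtain ⟨i, hi⟩ := hx
      exact (Finset.prod_eq_zero (Finset.mem_univ i) (indicator_of_notMem hi _)).symm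
  simp_rw [this]
  rw [lintegral_pi_prod μ _ (fun i => (hf i).indicator (hs i))]
  exact Finset.prod_congr rfl fun i _ =>
    (lintegral_indicator (hs i) _).trans (withDensity_apply _ (hs i)).symm

theorem map_withDensity_equiv {α β : Type*} [MeasurableSpace α] [MeasurableSpace β]
    (e : α ≃ᵐ β) (μ : Measure α) (g : β → ENNReal) (hg : Measurable g) :
    (Measure.map e μ).withDensity g = Measure.map e (μ.withDensity (g ∘ e)) := by
  ext s hs
  rw [withDensity_apply _ hs, Measure.map_apply e.measurable hs,
    withDensity_apply _ (e.measurable hs),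
    setLIntegral_map hs hg e.measurable]
  rfl

lemma exp_ne_one {θ : ℝ} (h0 : 0 < θ) (h2 : θ < 2 * π) : Complex.exp (θ * Complex.I) ≠ 1 := by
  intro h
  rw [Complex.exp_eq_one_iff] at h
  obtain ⟨k, hk⟩ := h
  have hI : (θ : ℂ) = (k : ℂ) * (2 * π) := by
    have hk' : (θ : ℂ) * Complex.I = ((k : ℂ) * (2 * π)) * Complex.I := by
      rw [hk]; ring
    exact mul_right_cancel₀ Complex.I_ne_zero hk'
  have hr : θ = (k : ℝ) * (2 * π) := by exact_mod_cast hI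
  have hπ := Real.pi_pos
  rcases lt_trichotomy (k : ℝ) 0 with h | h | h
  · nlinarith
  · rw [hr, h, zero_mul] at h0; exact lt_irrefl _ h0
  · have : (1 : ℝ) ≤ (k : ℝ) := by exact_mod_cast (by exact_mod_cast h : (0:ℤ) < k)
    nlinarith

lemma sum_cos_range (n m : ℕ) (hn : 0 < n) (hm0 : 0 < m) (hm : m < 2 * n) :
    ∑ k ∈ Finset.range n, Real.cos (π * m * k / n) = if Even m then 0 else 1 := by
  have hn' : (n : ℝ) ≠ 0 := Nat.cast_ne_zero.mpr hn.ne'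
  set θ : ℝ := π * m / n with hθdef
  have hπ := Real.pi_pos
  have hθ0 : 0 < θ := by positivity
  have hθ2 : θ < 2 * π := by
    rw [hθdef, div_lt_iff₀ (by positivity)]
    calc π * m < π * (2 * n) := by
          apply mul_lt_mul_of_pos_left _ hπ; exact_mod_cast hm
      _ = 2 * π * n := by ring
  set z : ℂ := Complex.exp (θ * Complex.I) with hz
  have hz1 : z ≠ 1 := exp_ne_one hθ0 hθ2
  have hzk : ∀ k : ℕ, z ^ k = Complex.exp ((θ * k : ℝ) * Complex.I) := by
    intro k
    rw [hz, ← Complex.exp_nat_mul]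
    push_cast
    ring_nf
  have hre : ∀ k : ℕ, (z ^ k).re = Real.cos (π * m * k / n) := by
    intro k
    rw [hzk k, Complex.exp_ofReal_mul_I_re]
    congr 1
    rw [hθdef]; ring
  have hgeom : ∑ k ∈ Finset.range n, z ^ k = (z ^ n - 1) / (z - 1) := geom_sum_eq hz1 n
  have hzn : z ^ n = (-1 : ℂ) ^ m := by
    rw [hzk n]
    have : (θ * n : ℝ) = π * m := by rw [hθdef]; field_simp
    rw [this]
    have : ((π * m : ℝ) : ℂ) * Complex.I = m * (π * Complex.I) := by push_cast; ring
    rw [this, Complex.exp_nat_mul, Complex.exp_pi_mul_I]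
  have hsumre : ∑ k ∈ Finset.range n, Real.cos (π * m * k / n)
      = ((z ^ n - 1) / (z - 1)).re := by
    rw [← hgeom, Complex.re_sum]
    exact Finset.sum_congr rfl fun k _ => (hre k).symm
  rw [hsumre]
  by_cases hev : Even m
  · have : z ^ n = 1 := by rw [hzn, hev.neg_one_pow]
    rw [this]
    simp [hev]
  · have hodd : z ^ n = -1 := by rw [hzn, (Nat.not_even_iff_odd.mp hev).neg_one_pow]
    rw [hodd, if_neg hev]
    have hzre : z.re = Real.cos θ := Complex.exp_ofReal_mul_I_re θ
    have hzim : z.im = Real.sin θ := Complex.exp_ofReal_mul_I_im θ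
    have hcos : Real.cos θ ≠ 1 := by
      intro hc
      have hs : Real.sin θ = 0 := by
        have := Real.sin_sq_add_cos_sq θ
        nlinarith
      apply hz1
      apply Complex.ext <;> simp [hzre, hzim, hc, hs]
    have hns : Complex.normSq (z - 1) = 2 - 2 * Real.cos θ := by
      rw [Complex.normSq_apply]
      simp only [Complex.sub_re, Complex.sub_im, Complex.one_re, Complex.one_im, hzre, hzim]
      have := Real.sin_sq_add_cos_sq θ
      nlinarith
    have : ((-1 : ℂ) - 1) = (-2 : ℂ) := by norm_num
    rw [this, Complex.div_re, hns]
    simp only [Complex.sub_re, Complex.sub_im, Complex.one_re, Complex.one_im, hzre, hzim]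
    have h2c : (2:ℝ) - 2 * Real.cos θ ≠ 0 := by
      intro h; apply hcos; linarith
    set c := Real.cos θ
    norm_num [Complex.neg_re, Complex.neg_im]
    field_simp
    ring


variable {n : ℕ}

lemma range_eq_insert (hn : 1 ≤ n) : Finset.range n = insert 0 (Finset.Icc 1 (n - 1)) := by
  ext k; simp only [Finset.mem_range, Finset.mem_insert, Finset.mem_Icc]; omega

lemma sum_cos_Icc (hn : 1 ≤ n) {m : ℕ} (hm0 : 0 < m) (hm : m < 2 * n) :
    ∑ k ∈ Finset.Icc 1 (n - 1), Real.cos (π * m * k / n)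
      = if Even m then -1 else 0 := by
  have h := sum_cos_range n m hn hm0 hm
  rw [range_eq_insert hn, Finset.sum_insert (by simp)] at h
  simp only [Nat.cast_zero, mul_zero, zero_div, Real.cos_zero] at h
  by_cases hev : Even m <;> simp only [hev, if_true, if_false, reduceIte] at h ⊢ <;> linarith

lemma sum_cos_Icc_full (hn : 1 ≤ n) {m : ℕ} (hm : m = 0 ∨ m = 2 * n) :
    ∑ k ∈ Finset.Icc 1 (n - 1), Real.cos (π * m * k / n) = (n : ℝ) - 1 := by
  have hn' : (n : ℝ) ≠ 0 := Nat.cast_ne_zero.mpr (by omega)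
  have h1 : ∀ k ∈ Finset.Icc 1 (n - 1), Real.cos (π * m * k / n) = 1 := by
    intro k _
    rcases hm with rfl | rfl
    · simp
    · have : π * ↑(2 * n) * ↑k / ↑n = (k : ℝ) * (2 * π) := by push_cast; field_simp
      rw [this, Real.cos_nat_mul_two_pi]
  rw [Finset.sum_congr rfl h1, Finset.sum_const, Nat.card_Icc]
  have h2 : n - 1 + 1 - 1 = n - 1 := by omega
  rw [h2, nsmul_eq_mul, Nat.cast_sub hn]
  push_cast
  ring

/-- the unnormalized coefficient matrix -/
noncomputable def Acoef (n j k : ℕ) : ℝ :=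
  (1 / Real.sqrt (2 * n)) *
    (if k = 0 then Real.sqrt 2 else if k = n then (-1 : ℝ) ^ j * Real.sqrt 2
      else 2 * Real.cos (2 * π * j * k / (2 * n)))

lemma gram_aux (hn : 1 ≤ n) {j l : ℕ} (hjn : j ≤ n) (hln : l ≤ n) (hlj : l ≤ j) :
    ∑ k ∈ Finset.range (n + 1), Acoef n j k * Acoef n l k
      = if j = l then (if j = 0 ∨ j = n then 2 else 1) else 0 := by
  have hn0 : (n : ℝ) ≠ 0 := Nat.cast_ne_zero.mpr (by omega)
  have hn0' : (0:ℝ) < 2 * n := by positivity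
  set w : ℝ := 1 / Real.sqrt (2 * n) with hw
  have hw2 : w ^ 2 = 1 / (2 * n) := by
    rw [hw, div_pow, one_pow, Real.sq_sqrt hn0'.le]
  have hsplit : Finset.range (n + 1) = insert 0 (insert n (Finset.Icc 1 (n - 1))) := by
    ext k; simp only [Finset.mem_range, Finset.mem_insert, Finset.mem_Icc]; omega
  have h0n : (0 : ℕ) ∉ insert n (Finset.Icc 1 (n - 1)) := by
    simp only [Finset.mem_insert, Finset.mem_Icc]; omega
  have hnn : n ∉ Finset.Icc 1 (n - 1) := by
    simp only [Finset.mem_Icc]; omega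
  rw [hsplit, Finset.sum_insert h0n, Finset.sum_insert hnn]
  have hA0 : ∀ i : ℕ, Acoef n i 0 = w * Real.sqrt 2 := by
    intro i; rw [Acoef, if_pos rfl]
  have hAn : ∀ i : ℕ, Acoef n i n = w * ((-1 : ℝ) ^ i * Real.sqrt 2) := by
    intro i; rw [Acoef, if_neg (by omega), if_pos rfl]
  have hAm : ∀ i k : ℕ, k ∈ Finset.Icc 1 (n - 1) →
      Acoef n i k = w * (2 * Real.cos (π * i * k / n)) := by
    intro i k hk
    simp only [Finset.mem_Icc] at hk
    rw [Acoef, if_neg (by omega), if_neg (by omega)]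
    have : 2 * π * (i:ℝ) * k / (2 * n) = π * i * k / n := by
      rw [div_eq_div_iff (by positivity) (by positivity)]; ring
    rw [this]
  rw [hA0, hA0, hAn, hAn]
  have hs2 : Real.sqrt 2 * Real.sqrt 2 = 2 := Real.mul_self_sqrt (by norm_num)
  have e1 : w * Real.sqrt 2 * (w * Real.sqrt 2) = w ^ 2 * 2 := by
    rw [mul_mul_mul_comm, hs2]; ring
  have e2 : w * ((-1:ℝ)^j * Real.sqrt 2) * (w * ((-1:ℝ)^l * Real.sqrt 2))
      = w ^ 2 * ((-1:ℝ)^(j+l) * 2) := by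
    rw [mul_mul_mul_comm, mul_mul_mul_comm ((-1:ℝ)^j), ← pow_add, hs2]; ring
  rw [e1, e2]
  have hmid : ∑ k ∈ Finset.Icc 1 (n - 1), Acoef n j k * Acoef n l k
      = w ^ 2 * 2 * ((∑ k ∈ Finset.Icc 1 (n - 1), Real.cos (π * ((j + l : ℕ) : ℝ) * k / n))
          + ∑ k ∈ Finset.Icc 1 (n - 1), Real.cos (π * ((j - l : ℕ) : ℝ) * k / n)) := by
    rw [← Finset.sum_add_distrib, Finset.mul_sum]
    refine Finset.sum_congr rfl fun k hk => ?_
    rw [hAm j k hk, hAm l k hk]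
    have h1 : π * ((j + l : ℕ) : ℝ) * k / n = π * j * k / n + π * l * k / n := by
      push_cast; ring
    have h2 : π * ((j - l : ℕ) : ℝ) * k / n = π * j * k / n - π * l * k / n := by
      rw [Nat.cast_sub hlj]; ring
    rw [h1, h2, Real.cos_add, Real.cos_sub]
    ring
  rw [hmid]
  by_cases heq : j = l
  · subst heq
    rw [if_pos rfl]
    have hS0 : ∑ k ∈ Finset.Icc 1 (n - 1), Real.cos (π * ((j - j : ℕ) : ℝ) * k / n)
        = (n : ℝ) - 1 := by
      rw [Nat.sub_self]; exact sum_cos_Icc_full hn (Or.inl rfl)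
    have hevjj : Even (j + j) := ⟨j, rfl⟩
    rw [hevjj.neg_one_pow]
    by_cases hj : j = 0 ∨ j = n
    · rw [if_pos hj]
      have hS2j : ∑ k ∈ Finset.Icc 1 (n - 1), Real.cos (π * ((j + j : ℕ) : ℝ) * k / n)
          = (n : ℝ) - 1 := by
        rcases hj with rfl | rfl
        · exact sum_cos_Icc_full hn (Or.inl rfl)
        · exact sum_cos_Icc_full hn (Or.inr (by omega))
      rw [hS2j, hS0, hw2]
      field_simp
      ring
    · rw [if_neg hj]
      push_neg at hj
      have hS2j : ∑ k ∈ Finset.Icc 1 (n - 1), Real.cos (π * ((j + j : ℕ) : ℝ) * k / n)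
          = -1 := by
        have := sum_cos_Icc hn (m := j + j) (by omega) (by omega)
        rwa [if_pos hevjj] at this
      rw [hS2j, hS0, hw2]
      field_simp
      ring
  · rw [if_neg heq]
    have hlt : l < j := lt_of_le_of_ne hlj (fun h => heq h.symm)
    have hjl2 : j + l < 2 * n := by omega
    have hS1 := sum_cos_Icc hn (m := j + l) (by omega) hjl2
    have hS2 := sum_cos_Icc hn (m := j - l) (by omega) (by omega)
    have hpar : Even (j + l) ↔ Even (j - l) := by
      rw [Nat.even_iff, Nat.even_iff]; omega
    by_cases hev : Even (j + l)
    · rw [hS1, hS2, if_pos hev, if_pos (hpar.mp hev), hev.neg_one_pow]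
      ring
    · rw [hS1, hS2, if_neg hev, if_neg (fun h => hev (hpar.mpr h)),
        (Nat.not_even_iff_odd.mp hev).neg_one_pow]
      ring




lemma gram (hn : 1 ≤ n) {j l : ℕ} (hjn : j ≤ n) (hln : l ≤ n) :
    ∑ k ∈ Finset.range (n + 1), Acoef n j k * Acoef n l k
      = if j = l then (if j = 0 ∨ j = n then 2 else 1) else 0 := by
  rcases le_total l j with h | h
  · exact gram_aux hn hjn hln h
  · have := gram_aux hn hln hjn h
    rw [Finset.sum_congr rfl (fun k _ => mul_comm (Acoef n j k) (Acoef n l k)), this]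
    by_cases heq : j = l
    · subst heq; simp
    · rw [if_neg heq, if_neg (fun hh => heq hh.symm)]

lemma sum_Acoef (hn : 1 ≤ n) (j : ℕ) (g : ℕ → ℝ) :
    ∑ k ∈ Finset.range (n + 1), Acoef n j k * g k
      = (1 / Real.sqrt (2 * n)) *
          (Real.sqrt 2 * g 0 + (-1 : ℝ) ^ j * Real.sqrt 2 * g n
            + 2 * ∑ k ∈ Finset.Icc 1 (n - 1), g k * Real.cos (2 * π * j * k / (2 * n))) := by
  set w : ℝ := 1 / Real.sqrt (2 * n) with hw
  have hsplit : Finset.range (n + 1) = insert 0 (insert n (Finset.Icc 1 (n - 1))) := by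
    ext k; simp only [Finset.mem_range, Finset.mem_insert, Finset.mem_Icc]; omega
  have h0n : (0 : ℕ) ∉ insert n (Finset.Icc 1 (n - 1)) := by
    simp only [Finset.mem_insert, Finset.mem_Icc]; omega
  have hnn : n ∉ Finset.Icc 1 (n - 1) := by
    simp only [Finset.mem_Icc]; omega
  rw [hsplit, Finset.sum_insert h0n, Finset.sum_insert hnn]
  have hA0 : Acoef n j 0 = w * Real.sqrt 2 := by rw [Acoef, if_pos rfl]
  have hAn : Acoef n j n = w * ((-1 : ℝ) ^ j * Real.sqrt 2) := by
    rw [Acoef, if_neg (by omega), if_pos rfl]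
  have hmid : ∑ k ∈ Finset.Icc 1 (n - 1), Acoef n j k * g k
      = w * (2 * ∑ k ∈ Finset.Icc 1 (n - 1), g k * Real.cos (2 * π * j * k / (2 * n))) := by
    rw [Finset.mul_sum, Finset.mul_sum]
    refine Finset.sum_congr rfl fun k hk => ?_
    simp only [Finset.mem_Icc] at hk
    rw [Acoef, if_neg (by omega), if_neg (by omega)]
    ring
  rw [hA0, hAn, hmid]
  ring


end GaussAux
open MeasureTheory ProbabilityTheory Real

/-- The Gaussian case: if `G_0, …, G_n` are i.i.d. standard Gaussians and
`d_j = (2n)^{-1/2}[√2 G_0 + (−1)^j √2 G_n + 2 ∑_{k=1}^{n−1} G_k cos(2πjk/(2n))]`, then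
`d_1, …, d_{n−1}` are i.i.d. standard Gaussians, and `d_0, d_n` are Gaussians with
variance `2`, the whole family `d_0, …, d_n` being independent. -/
theorem gaussian_circulant_eigenvalues
    {Ω : Type*} [MeasurableSpace Ω] (μ : Measure Ω) [IsProbabilityMeasure μ]
    (n : ℕ) (hn : 1 ≤ n) (G : ℕ → Ω → ℝ)
    (hmeas : ∀ i, Measurable (G i))
    (hindep : iIndepFun (fun i : Fin (n + 1) => G i) μ)
    (hlaw : ∀ i ≤ n, Measure.map (G i) μ = gaussianReal 0 1)
    (d : ℕ → Ω → ℝ)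
    (hd : ∀ j < 2 * n, d j = fun ω =>
      (1 / Real.sqrt (2 * n)) *
        (Real.sqrt 2 * G 0 ω + (-1 : ℝ) ^ j * Real.sqrt 2 * G n ω
          + 2 * ∑ k ∈ Finset.Icc 1 (n - 1), G k ω * Real.cos (2 * π * j * k / (2 * n)))) :
    iIndepFun (fun j : Fin (n + 1) => d j) μ ∧
    (∀ j : ℕ, 0 < j → j < n → Measure.map (d j) μ = gaussianReal 0 1) ∧
    (∀ j : ℕ, j = 0 ∨ j = n → Measure.map (d j) μ = gaussianReal 0 2) := by
  classical
  -- measurability of the d's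
  have hdm : ∀ j : ℕ, j ≤ n → Measurable (d j) := by
    intro j hj
    rw [hd j (by omega)]
    have hS : Measurable fun ω => ∑ k ∈ Finset.Icc 1 (n - 1),
        G k ω * Real.cos (2 * π * j * k / (2 * n)) :=
      Finset.measurable_sum _ fun k _ => (hmeas k).mul_const _
    exact ((((hmeas 0).const_mul _).add ((hmeas n).const_mul _)).add
      (hS.const_mul 2)).const_mul _
  -- variances
  set σv : Fin (n + 1) → NNReal := fun j => if (j : ℕ) = 0 ∨ (j : ℕ) = n then 2 else 1 with hσv
  set ν : Fin (n + 1) → Measure ℝ := fun j => gaussianReal 0 (σv j) with hν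
  haveI hνp : ∀ j, IsProbabilityMeasure (ν j) := fun j => by
    rw [hν]; infer_instance
  -- the vector of G's
  set ΦG : Ω → (Fin (n + 1) → ℝ) := fun ω i => G i ω with hΦG
  have hΦGm : Measurable ΦG := measurable_pi_lambda _ fun i => hmeas i
  have hmapG : Measure.map ΦG μ = Measure.pi (fun _ : Fin (n + 1) => gaussianReal 0 1) := by
    refine (Measure.pi_eq fun s hs => ?_).symm
    rw [Measure.map_apply hΦGm (MeasurableSet.univ_pi hs)]
    have hpre : ΦG ⁻¹' (Set.univ.pi s)
        = ⋂ i ∈ Finset.univ, (fun i : Fin (n + 1) => G i) i ⁻¹' s i := by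
      ext ω
      simp [hΦG, Set.mem_pi]
    rw [hpre, hindep.measure_inter_preimage_eq_mul Finset.univ (fun i _ => hs i)]
    refine Finset.prod_congr rfl fun i _ => ?_
    rw [← Measure.map_apply (hmeas i) (hs i), hlaw i (Nat.lt_succ_iff.mp i.isLt)]
  -- the orthonormal basis
  set sr : Fin (n + 1) → ℝ := fun j => Real.sqrt (σv j) with hsr
  have hσpos : ∀ j, 0 < (σv j : ℝ) := by
    intro j; rw [hσv]; dsimp only; split <;> norm_num
  have hsr_pos : ∀ j, 0 < sr j := fun j => Real.sqrt_pos.mpr (hσpos j)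
  have hsr_sq : ∀ j, sr j * sr j = (σv j : ℝ) := fun j => Real.mul_self_sqrt (hσpos j).le
  set v : Fin (n + 1) → EuclideanSpace ℝ (Fin (n + 1)) :=
    fun j => WithLp.toLp 2 (fun k => GaussAux.Acoef n j k / sr j) with hv
  have hon : Orthonormal ℝ v := by
    rw [orthonormal_iff_ite]
    intro i j
    have hinner : (inner ℝ (v i) (v j) : ℝ)
        = (∑ k : Fin (n + 1), GaussAux.Acoef n i k * GaussAux.Acoef n j k) / (sr i * sr j) := by
      rw [PiLp.inner_apply]
      simp only [RCLike.inner_apply, conj_trivial, hv, PiLp.toLp_apply]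
      rw [Finset.sum_div]
      exact Finset.sum_congr rfl fun k _ => by rw [div_mul_div_comm]; ring
    rw [hinner, Fin.sum_univ_eq_sum_range (fun k => GaussAux.Acoef n i k * GaussAux.Acoef n j k),
      GaussAux.gram hn (Nat.lt_succ_iff.mp i.isLt) (Nat.lt_succ_iff.mp j.isLt)]
    by_cases hij : i = j
    · subst hij
      rw [if_pos rfl, if_pos rfl, hsr_sq]
      have : (if (i : ℕ) = 0 ∨ (i : ℕ) = n then (2:ℝ) else 1) = (σv i : ℝ) := by
        rw [hσv]; dsimp only; split <;> norm_num
      rw [this, div_self (hσpos i).ne']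
    · rw [if_neg (fun h => hij (Fin.val_injective h)), if_neg hij, zero_div]
  set b : OrthonormalBasis (Fin (n + 1)) ℝ (EuclideanSpace ℝ (Fin (n + 1))) :=
    OrthonormalBasis.mk hon (by
      refine (hon.linearIndependent.span_eq_top_of_card_eq_finrank ?_).ge
      simp [finrank_euclideanSpace_fin]) with hb
  -- densities
  set Fd : (Fin (n + 1) → ℝ) → ENNReal := fun x => ∏ i, gaussianPDF 0 1 (x i) with hFd
  have hFdm : Measurable Fd :=
    Finset.measurable_prod _ fun i _ => (measurable_gaussianPDF 0 1).comp (measurable_pi_apply i)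
  set C : ℝ := (Real.sqrt (2 * π * 1))⁻¹ with hC
  set Fhat : EuclideanSpace ℝ (Fin (n + 1)) → ENNReal :=
    fun y => ENNReal.ofReal (C ^ (n + 1) * Real.exp (-‖y‖ ^ 2 / 2)) with hFhat
  have hFhatm : Measurable Fhat := by
    have : Continuous fun y : EuclideanSpace ℝ (Fin (n + 1)) =>
        C ^ (n + 1) * Real.exp (-‖y‖ ^ 2 / 2) := by continuity
    exact this.measurable.ennreal_ofReal
  have hpdf : ∀ t : ℝ, gaussianPDFReal 0 1 t = C * Real.exp (-t ^ 2 / 2) := by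
    intro t
    rw [gaussianPDFReal, hC]
    norm_num
  have hFdFhat : ∀ y : EuclideanSpace ℝ (Fin (n + 1)),
      Fd ((MeasurableEquiv.toLp 2 (Fin (n + 1) → ℝ)).symm y) = Fhat y := by
    intro y
    have happ : ∀ i, ((MeasurableEquiv.toLp 2 (Fin (n + 1) → ℝ)).symm y) i = y i := fun i => rfl
    rw [hFd]
    simp only [happ]
    rw [hFhat]
    have hnn : ∀ i, 0 ≤ gaussianPDFReal 0 1 (y i) := fun i => gaussianPDFReal_nonneg 0 1 (y i)
    calc (∏ i, gaussianPDF 0 1 (y i))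
        = ENNReal.ofReal (∏ i, gaussianPDFReal 0 1 (y i)) := by
          rw [ENNReal.ofReal_prod_of_nonneg (fun i _ => hnn i)]; rfl
      _ = ENNReal.ofReal (C ^ (n + 1) * Real.exp (-‖y‖ ^ 2 / 2)) := by
          congr 1
          simp_rw [hpdf]
          have hnorm : ‖y‖ ^ 2 = ∑ i, (y i) ^ 2 := by
            rw [EuclideanSpace.norm_eq, Real.sq_sqrt (by positivity)]
            simp [Real.norm_eq_abs, sq_abs]
          have hsum : ∑ i, -(y i) ^ 2 / 2 = -‖y‖ ^ 2 / 2 := by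
            rw [hnorm, ← Finset.sum_neg_distrib, Finset.sum_div]
          rw [Finset.prod_mul_distrib, Finset.prod_const, ← Real.exp_sum, hsum,
            Finset.card_univ, Fintype.card_fin]
  -- Γ, the standard Gaussian on the product
  set Γ : Measure (Fin (n + 1) → ℝ) := Measure.pi (fun _ => gaussianReal 0 1) with hΓdef
  haveI : SigmaFinite ((volume : Measure ℝ).withDensity (gaussianPDF 0 1)) := by
    rw [← gaussianReal_of_var_ne_zero 0 one_ne_zero]; infer_instance
  have hΓ : Γ = (Measure.pi fun _ : Fin (n + 1) => (volume : Measure ℝ)).withDensity Fd := by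
    calc Γ = Measure.pi (fun _ : Fin (n + 1) => volume.withDensity (gaussianPDF 0 1)) := by
          rw [hΓdef]; congr 1; funext _; rw [gaussianReal_of_var_ne_zero 0 one_ne_zero]
      _ = _ := GaussAux.pi_withDensity _ _ (fun _ => measurable_gaussianPDF 0 1)
  set e : EuclideanSpace ℝ (Fin (n + 1)) ≃ᵐ (Fin (n + 1) → ℝ) :=
    (MeasurableEquiv.toLp 2 (Fin (n + 1) → ℝ)).symm with he
  have hvol : Measure.map e volume = Measure.pi fun _ : Fin (n + 1) => (volume : Measure ℝ) := by
    rw [(EuclideanSpace.volume_preserving_symm_measurableEquiv_toLp (Fin (n + 1))).map_eq, volume_pi]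
  have hΓ2 : Γ = Measure.map e
      ((volume : Measure (EuclideanSpace ℝ (Fin (n + 1)))).withDensity Fhat) := by
    rw [hΓ, ← hvol, GaussAux.map_withDensity_equiv e volume Fd hFdm]
    congr 1
    rw [show Fd ∘ ⇑e = Fhat from funext fun y => hFdFhat y]
  -- rotation invariance
  have hrot : Measure.map (⇑b.measurableEquiv) (volume.withDensity Fhat)
      = volume.withDensity Fhat := by
    have h1 := GaussAux.map_withDensity_equiv b.measurableEquiv volume Fhat hFhatm
    rw [b.measurePreserving_measurableEquiv.map_eq] at h1
    have hco : Fhat ∘ ⇑b.measurableEquiv = Fhat := by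
      funext y
      show Fhat (b.repr y) = Fhat y
      rw [hFhat]
      simp only [LinearIsometryEquiv.norm_map]
    rw [hco] at h1
    exact h1.symm
  set R : (Fin (n + 1) → ℝ) → (Fin (n + 1) → ℝ) := ⇑e ∘ ⇑b.measurableEquiv ∘ ⇑e.symm with hR
  have hRm : Measurable R :=
    e.measurable.comp ((b.measurableEquiv.measurable).comp e.symm.measurable)
  have hmapR : Measure.map R Γ = Γ := by
    rw [hΓ2, Measure.map_map hRm e.measurable]
    have : R ∘ ⇑e = ⇑e ∘ ⇑b.measurableEquiv := by
      funext x
      simp [hR, Function.comp, e.symm_apply_apply]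
    rw [this, ← Measure.map_map e.measurable b.measurableEquiv.measurable, hrot]
  -- scaling
  set Smap : (Fin (n + 1) → ℝ) → (Fin (n + 1) → ℝ) := fun x j => sr j * x j with hSmap
  have hSm : Measurable Smap := measurable_pi_lambda _ fun j => (measurable_pi_apply j).const_mul _
  have hmapS : Measure.map Smap Γ = Measure.pi ν := by
    refine (Measure.pi_eq fun s hs => ?_).symm
    rw [Measure.map_apply hSm (MeasurableSet.univ_pi hs)]
    have hpre : Smap ⁻¹' (Set.univ.pi s) = Set.univ.pi fun j => (fun t => sr j * t) ⁻¹' s j := by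
      ext x; simp [hSmap, Set.mem_pi]
    rw [hpre, hΓdef, Measure.pi_pi]
    refine Finset.prod_congr rfl fun j _ => ?_
    have h1 : gaussianReal 0 1 ((fun t => sr j * t) ⁻¹' s j)
        = (Measure.map (fun t => sr j * t) (gaussianReal 0 1)) (s j) :=
      (Measure.map_apply (measurable_id.const_mul _) (hs j)).symm
    have h2 := gaussianReal_map_const_mul (μ := 0) (v := 1) (sr j)
    have h3 : (NNReal.mk ((sr j) ^ 2) (sq_nonneg _)) * 1 = σv j := by
      ext
      simp [sq, hsr_sq j]
    rw [h1, h2, mul_zero, h3, hν]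
  -- the vector of d's
  set Dv : Ω → (Fin (n + 1) → ℝ) := fun ω j => d j ω with hDv
  have hDvm : Measurable Dv :=
    measurable_pi_lambda _ fun j => hdm j (Nat.lt_succ_iff.mp j.isLt)
  have hDeq : Dv = Smap ∘ R ∘ ΦG := by
    funext ω
    funext j
    show d j ω = sr j * (b.repr (e.symm (ΦG ω)) j)
    rw [OrthonormalBasis.repr_apply_apply]
    rw [hb, OrthonormalBasis.coe_mk]
    rw [PiLp.inner_apply]
    simp only [RCLike.inner_apply, conj_trivial]
    rw [Finset.mul_sum]
    have hterm : ∀ k : Fin (n + 1),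
        sr j * ((e.symm (ΦG ω)) k * v j k) = GaussAux.Acoef n j k * G k ω := by
      intro k
      have h1 : (e.symm (ΦG ω)) k = G k ω := rfl
      rw [h1, hv]
      have hne := (hsr_pos j).ne'
      field_simp
    rw [Finset.sum_congr rfl fun k _ => hterm k,
      Fin.sum_univ_eq_sum_range (fun k => GaussAux.Acoef n (j : ℕ) k * G k ω),
      GaussAux.sum_Acoef hn]
    exact congrFun (hd (j : ℕ) (by omega)) ω
  have hmapD : Measure.map Dv μ = Measure.pi ν := by
    rw [hDeq, show Smap ∘ R ∘ ΦG = (Smap ∘ R) ∘ ΦG from rfl,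
      ← Measure.map_map (hSm.comp hRm) hΦGm, ← Measure.map_map hSm hRm, hmapG,
      hmapR, hmapS]
  -- marginals
  have hmarg : ∀ (j : Fin (n + 1)) (s : Set ℝ), MeasurableSet s → μ (d (j : ℕ) ⁻¹' s) = ν j s := by
    intro j s hs
    have h1 : d (j : ℕ) ⁻¹' s = Dv ⁻¹' (Function.eval j ⁻¹' s) := rfl
    rw [h1, ← Measure.map_apply hDvm ((measurable_pi_apply j) hs), hmapD,
      Set.eval_preimage, Measure.pi_pi]
    refine (Finset.prod_eq_single_of_mem j (Finset.mem_univ j) ?_).trans ?_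
    · intro i _ hij
      rw [Function.update_of_ne hij]
      exact measure_univ
    · rw [Function.update_self]
  refine ⟨?_, ?_, ?_⟩
  · rw [ProbabilityTheory.iIndepFun_iff_measure_inter_preimage_eq_mul]
    intro S sets hsets
    set sets' : Fin (n + 1) → Set ℝ := fun i => if i ∈ S then sets i else Set.univ with hsets'def
    have hsets' : ∀ i, MeasurableSet (sets' i) := fun i => by
      by_cases h : i ∈ S
      · simpa [hsets'def, h] using hsets i h
      · simp [hsets'def, h]
    have h1 : (⋂ i ∈ S, d (i : ℕ) ⁻¹' sets i) = Dv ⁻¹' (Set.univ.pi sets') := by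
      ext ω
      simp only [Set.mem_iInter, Set.mem_preimage, Set.mem_pi, Set.mem_univ, true_implies]
      constructor
      · intro h i
        by_cases hi : i ∈ S
        · simpa [hsets'def, hi] using h i hi
        · simp [hsets'def, hi]
      · intro h i hi
        have := h i
        simpa [hsets'def, hi] using this
    rw [h1, ← Measure.map_apply hDvm (MeasurableSet.univ_pi hsets'), hmapD, Measure.pi_pi]
    have h2 : ∀ i ∈ S, μ (d (i : ℕ) ⁻¹' sets i) = ν i (sets i) := fun i hi =>
      hmarg i _ (hsets i hi)
    rw [Finset.prod_congr rfl h2]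
    have h3 : ∀ i ∈ S, ν i (sets' i) = ν i (sets i) := by
      intro i hi; rw [hsets'def]; simp [hi]
    rw [← Finset.prod_congr rfl h3]
    refine (Finset.prod_subset (Finset.subset_univ S) ?_).symm
    intro i _ hi
    rw [hsets'def]
    simp only [hi, if_false]
    exact measure_univ
  · intro j hj0 hjn
    have hjn1 : j < n + 1 := by omega
    refine Measure.ext fun s hs => ?_
    rw [Measure.map_apply (hdm j (by omega)) hs]
    have h1 : μ (d j ⁻¹' s) = ν ⟨j, hjn1⟩ s := hmarg ⟨j, hjn1⟩ s hs
    have hco : σv ⟨j, hjn1⟩ = 1 := by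
      have hcond : ¬((((⟨j, hjn1⟩ : Fin (n + 1)) : ℕ) = 0)
          ∨ (((⟨j, hjn1⟩ : Fin (n + 1)) : ℕ) = n)) := by
        show ¬(j = 0 ∨ j = n); omega
      simp only [hσv]
      rw [if_neg hcond]
    rw [h1]
    simp only [hν]
    rw [hco]
  · intro j hj
    have hjn1 : j < n + 1 := by omega
    refine Measure.ext fun s hs => ?_
    rw [Measure.map_apply (hdm j (by omega)) hs]
    have h1 : μ (d j ⁻¹' s) = ν ⟨j, hjn1⟩ s := hmarg ⟨j, hjn1⟩ s hs
    have hco : σv ⟨j, hjn1⟩ = 2 := by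
      have hcond : ((((⟨j, hjn1⟩ : Fin (n + 1)) : ℕ) = 0)
          ∨ (((⟨j, hjn1⟩ : Fin (n + 1)) : ℕ) = n)) := by
        show (j = 0 ∨ j = n); omega
      simp only [hσv]
      rw [if_pos hcond]
    rw [h1]
    simp only [hν]
    rw [hco]
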